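/- A finite word σ₀...σ_n is a 'good prefix' for an sc-LTL formula φ (i.e., every infinite extension satisfies φ) if the iterated progression of φ along σ₀...σ_n is semantically equivalent to True. -/

import Mathlib

inductive LTL (P : Type) : Type
  | tt : LTL P
  | atom : P → LTL P
  | neg : LTL P → LTL P
  | conj : LTL P → LTL P → LTL P
  | disj : LTL P → LTL P → LTL P
  | next : LTL P → LTL P
  | until_ : LTL P → LTL P → LTL P
  deriving DecidableEq

namespace LTL
variable {P : Type}

/-- The Boolean constant False, encoded as ¬⊤. -/
def ff : LTL P := neg tt

/-- Standard LTL semantics: `sat σ i φ` means ⟨σ, i⟩ ⊨ φ. -/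
def sat (σ : ℕ → Set P) : ℕ → LTL P → Prop
  | _, tt => True
  | i, atom p => p ∈ σ i
  | i, neg φ => ¬ sat σ i φ
  | i, conj φ ψ => sat σ i φ ∧ sat σ i ψ
  | i, disj φ ψ => sat σ i φ ∨ sat σ i ψ
  | i, next φ => sat σ (i+1) φ
  | i, until_ φ ψ => ∃ j, i ≤ j ∧ sat σ j ψ ∧ ∀ k, i ≤ k → k < j → sat σ k φ

open Classical in
/-- The LTL progression operator `prog a φ` (a = current letter in 2^Π). -/
noncomputable def prog (a : Set P) : LTL P → LTL P
  | tt => tt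
  | atom p => if p ∈ a then tt else ff
  | neg φ => neg (prog a φ)
  | conj φ ψ => conj (prog a φ) (prog a ψ)
  | disj φ ψ => disj (prog a φ) (prog a ψ)
  | next φ => φ
  | until_ φ ψ => disj (prog a ψ) (conj (prog a φ) (until_ φ ψ))

end LTL

/-- Eventually: ◊φ := ⊤ ∪ φ. -/
def LTL.ev {P : Type} (φ : LTL P) : LTL P := LTL.until_ LTL.tt φ

/-- Syntactically co-safe LTL: negation only in front of atomic propositions. -/
inductive LTL.CoSafe {P : Type} : LTL P → Prop
  | tt : LTL.CoSafe LTL.tt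
  | atom (p : P) : LTL.CoSafe (LTL.atom p)
  | natom (p : P) : LTL.CoSafe (LTL.neg (LTL.atom p))
  | conj {φ ψ : LTL P} : LTL.CoSafe φ → LTL.CoSafe ψ → LTL.CoSafe (LTL.conj φ ψ)
  | disj {φ ψ : LTL P} : LTL.CoSafe φ → LTL.CoSafe ψ → LTL.CoSafe (LTL.disj φ ψ)
  | next {φ : LTL P} : LTL.CoSafe φ → LTL.CoSafe (LTL.next φ)
  | until_ {φ ψ : LTL P} : LTL.CoSafe φ → LTL.CoSafe ψ → LTL.CoSafe (LTL.until_ φ ψ)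

/-- Iterated progression along a finite word (list of letters). -/
noncomputable def LTL.progList {P : Type} (φ : LTL P) : List (Set P) → LTL P
  | [] => φ
  | a :: w => LTL.progList (LTL.prog a φ) w

lemma LTL.sat_shift {P : Type} (σ : ℕ → Set P) (k : ℕ) :
    ∀ (φ : LTL P) (i : ℕ), LTL.sat (fun j => σ (k + j)) i φ ↔ LTL.sat σ (k + i) φ := by
  intro φ
  induction φ with
  | tt => intro i; simp [LTL.sat]
  | atom p => intro i; simp [LTL.sat]
  | neg φ ih => intro i; simp [LTL.sat, ih]
  | conj φ ψ ihφ ihψ => intro i; simp [LTL.sat, ihφ, ihψ]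
  | disj φ ψ ihφ ihψ => intro i; simp [LTL.sat, ihφ, ihψ]
  | next φ ih =>
      intro i
      have := ih (i + 1)
      simp only [LTL.sat]
      rw [this, show k + (i + 1) = k + i + 1 from by omega]
  | until_ φ ψ ihφ ihψ =>
      intro i
      simp only [LTL.sat]
      constructor
      · rintro ⟨j, hij, hψ, hφ⟩
        refine ⟨k + j, by omega, (ihψ j).mp hψ, ?_⟩
        intro m hm1 hm2
        have := (ihφ (m - k)).mp (hφ (m - k) (by omega) (by omega))
        convert this using 2; omega
      · rintro ⟨j, hij, hψ, hφ⟩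
        refine ⟨j - k, by omega, ?_, ?_⟩
        · have := (ihψ (j - k)).mpr (by convert hψ using 2; omega)
          exact this
        · intro m hm1 hm2
          exact (ihφ m).mpr (hφ (k + m) (by omega) (by omega))

lemma LTL.sat_prog {P : Type} (σ : ℕ → Set P) :
    ∀ (φ : LTL P) (i : ℕ), LTL.sat σ (i + 1) (LTL.prog (σ i) φ) ↔ LTL.sat σ i φ := by
  intro φ
  induction φ with
  | tt => intro i; simp [LTL.prog, LTL.sat]
  | atom p =>
      intro i
      by_cases hp : p ∈ σ i <;> simp [LTL.prog, hp, LTL.ff, LTL.sat]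
  | neg φ ih => intro i; simp [LTL.prog, LTL.sat, ih]
  | conj φ ψ ihφ ihψ => intro i; simp [LTL.prog, LTL.sat, ihφ, ihψ]
  | disj φ ψ ihφ ihψ => intro i; simp [LTL.prog, LTL.sat, ihφ, ihψ]
  | next φ ih => intro i; simp [LTL.prog, LTL.sat]
  | until_ φ ψ ihφ ihψ =>
      intro i
      simp only [LTL.prog, LTL.sat, ihφ, ihψ]
      constructor
      · rintro (hψ | ⟨hφ, j, hij, hjψ, hjφ⟩)
        · exact ⟨i, le_refl i, hψ, fun k h1 h2 => absurd (lt_of_le_of_lt h1 h2) (lt_irrefl i)⟩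
        · refine ⟨j, by omega, hjψ, ?_⟩
          intro m hm1 hm2
          rcases Nat.eq_or_lt_of_le hm1 with rfl | hm
          · exact hφ
          · exact hjφ m (by omega) hm2
      · rintro ⟨j, hij, hjψ, hjφ⟩
        rcases Nat.eq_or_lt_of_le hij with rfl | hij'
        · exact Or.inl hjψ
        · exact Or.inr ⟨hjφ i (le_refl i) hij', j, by omega, hjψ,
            fun m h1 h2 => hjφ m (by omega) h2⟩

lemma LTL.sat_progList {P : Type} (σ : ℕ → Set P) :
    ∀ (w : List (Set P)) (φ : LTL P) (i : ℕ),
      (∀ m (hm : m < w.length), σ (i + m) = w[m]) →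
      (LTL.sat σ (i + w.length) (LTL.progList φ w) ↔ LTL.sat σ i φ) := by
  intro w
  induction w with
  | nil => intro φ i _; simp [LTL.progList]
  | cons a w ih =>
      intro φ i hm
      have ha : σ i = a := by exact hm 0 (by simp)
      have htail : ∀ m (hm' : m < w.length), σ (i + 1 + m) = w[m] := by
        intro m hm'
        have := hm (m + 1) (by simpa using Nat.succ_lt_succ hm')
        rw [show i + 1 + m = i + (m + 1) from by omega]
        exact this
      have := ih (LTL.prog a φ) (i + 1) htail
      have hlen : i + (a :: w).length = i + 1 + w.length := by simp; omega
      rw [LTL.progList, hlen, this, ← ha, LTL.sat_prog]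

/-- a finite word σ₀...σ_n is a good prefix for an sc-LTL formula φ
(every infinite extension satisfies φ at position 0) if the iterated progression of φ
along σ₀...σ_n is semantically equivalent to True. -/
theorem good_prefix_of_progression_true {P : Type} (φ : LTL P) (hφ : LTL.CoSafe φ)
    (w : List (Set P)) (hw : w ≠ [])
    (h : ∀ τ : ℕ → Set P, LTL.sat τ 0 (LTL.progList φ w)) :
    ∀ σ : ℕ → Set P, (∀ i : ℕ, (hi : i < w.length) → σ i = w[i]) →
      LTL.sat σ 0 φ := by
  intro σ hσ
  have h1 := h (fun j => σ (w.length + j))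
  have h2 : LTL.sat σ w.length (LTL.progList φ w) := by
    have := (LTL.sat_shift σ w.length (LTL.progList φ w) 0).mp h1
    simpa using this
  have := LTL.sat_progList σ w φ 0 (by intro m hm; simpa using hσ m hm)
  rw [← this]
  simpa using h2
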